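/- Let A be a C*-algebra, X a q-normed space with 0 < q ≤ 1, Φ : A → X a continuous linear map, and m ≥ 2. Let P(x) = Φ(x^m). Then 2^{-1/q} ‖Φ‖ ≤ ‖P‖ ≤ ‖Φ‖, where ‖P‖ = sup{‖P(x)‖ : ‖x‖ ≤ 1}. -/

import Mathlib

open Complex in
lemma selfAdjoint_eq_pow_of_norm_le {A : Type*} [CStarAlgebra A] {m : ℕ} (hm : m ≠ 0)
    {h : A} (hsa : IsSelfAdjoint h) (hnorm : ‖h‖ ≤ 1) :
    ∃ y : A, ‖y‖ ≤ 1 ∧ y ^ m = h := by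
  classical
  set e : ℂ := Complex.exp ((Real.pi / m : ℝ) * Complex.I) with he
  set g : ℝ → ℂ := fun t => if (0:ℝ) ≤ t then ((|t| ^ (m:ℝ)⁻¹ : ℝ) : ℂ)
    else ((|t| ^ (m:ℝ)⁻¹ : ℝ) : ℂ) * e with hg
  have hcont_base : Continuous fun t : ℝ => ((|t| ^ (m:ℝ)⁻¹ : ℝ) : ℂ) := by
    refine Complex.continuous_ofReal.comp ?_
    exact (continuous_abs.rpow_const (fun x => Or.inr (by positivity)))
  have hgc : Continuous g := by
    rw [hg]
    exact Continuous.if_le hcont_base (hcont_base.mul continuous_const)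
      continuous_const continuous_id (by intro x hx; simp [← hx, Real.zero_rpow (inv_ne_zero (Nat.cast_ne_zero.mpr hm : (m:ℝ) ≠ 0))])
  have hgm : ∀ t : ℝ, g t ^ m = (t : ℂ) := by
    intro t
    have habs : ((|t| ^ (m:ℝ)⁻¹ : ℝ) : ℂ) ^ m = ((|t| : ℝ) : ℂ) := by
      rw [← Complex.ofReal_pow]
      norm_cast
      rw [← Real.rpow_natCast (|t| ^ (m:ℝ)⁻¹) m, ← Real.rpow_mul (abs_nonneg t),
        inv_mul_cancel₀ (by exact_mod_cast hm), Real.rpow_one]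
    have hem : e ^ m = -1 := by
      rw [he, ← Complex.exp_nat_mul]
      have : (m : ℂ) * ((Real.pi / m : ℝ) * Complex.I) = (Real.pi : ℂ) * Complex.I := by
        have hmC : (m:ℂ) ≠ 0 := Nat.cast_ne_zero.mpr hm
        push_cast
        field_simp
      rw [this, Complex.exp_pi_mul_I]
    by_cases ht : (0:ℝ) ≤ t
    · rw [hg]; simp only [ht, if_true]
      rw [habs, _root_.abs_of_nonneg ht]
    · rw [hg]; simp only [ht, if_false]
      rw [mul_pow, habs, hem, _root_.abs_of_neg (lt_of_not_ge ht)]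
      push_cast; ring
  by_cases hA : Subsingleton A
  · exact ⟨0, by simp, Subsingleton.elim _ _⟩
  have : Nontrivial A := not_subsingleton_iff_nontrivial.mp hA
  set F : ℂ → ℂ := fun z => g z.re with hF
  have hFc : Continuous F := hgc.comp Complex.continuous_re
  refine ⟨cfc F h, ?_, ?_⟩
  · refine norm_cfc_le zero_le_one fun z hz => ?_
    have hz1 : ‖z‖ ≤ 1 := (spectrum.norm_le_norm_of_mem hz).trans hnorm
    have hre : |z.re| ≤ 1 := (Complex.abs_re_le_norm z).trans hz1
    have hb : |z.re| ^ (m:ℝ)⁻¹ ≤ 1 :=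
      Real.rpow_le_one (abs_nonneg _) hre (by positivity)
    have hbe : ‖e‖ = 1 := Complex.norm_exp_ofReal_mul_I _
    rw [hF]
    by_cases ht : (0:ℝ) ≤ z.re
    · simp only [hg, ht, if_true, Complex.norm_real]
      rw [Real.norm_eq_abs, _root_.abs_of_nonneg (by positivity)]
      exact hb
    · simp only [hg, ht, if_false, norm_mul, hbe, mul_one, Complex.norm_real]
      rw [Real.norm_eq_abs, _root_.abs_of_nonneg (by positivity)]
      exact hb
  · have := cfc_pow F m h (hFc.continuousOn)
    rw [← this]
    have : cfc (fun z => F z ^ m) h = cfc (fun z : ℂ => z) h := by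
      refine cfc_congr fun z hz => ?_
      have him : z.im = 0 := hsa.im_eq_zero_of_mem_spectrum hz
      have hzre : (z.re : ℂ) = z := Complex.ext (by simp) (by simp [him])
      rw [hF]; simp only
      rw [hgm z.re, hzre]
    rw [this, cfc_id' ℂ h]

/-- Let `A` be a C*-algebra and `X` a `q`-normed space (`0 < q ≤ 1`) with `q`-norm `N`.
For a linear map `Φ : A → X` and `m ≥ 2`, set `P x = Φ (x^m)`.  If `normΦ` and `normP`
are the least upper bounds of `N ∘ Φ` and `N ∘ P` on the closed unit ball of `A`
(so that `Φ` is bounded, i.e. continuous), then `2^{-1/q} * normΦ ≤ normP ≤ normΦ`. -/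
theorem stmt_11 {A X : Type*} [CStarAlgebra A] [AddCommGroup X] [Module ℂ X]
    (q : ℝ) (hq0 : 0 < q) (hq1 : q ≤ 1)
    (N : X → ℝ)
    (hN0 : ∀ x, 0 ≤ N x)
    (hNzero : ∀ x, N x = 0 ↔ x = 0)
    (hNadd : ∀ x y, N (x + y) ^ q ≤ N x ^ q + N y ^ q)
    (hNsmul : ∀ (c : ℂ) (x : X), N (c • x) = ‖c‖ * N x)
    (m : ℕ) (hm : 2 ≤ m)
    (Φ : A →ₗ[ℂ] X)
    (normΦ normP : ℝ)
    (hΦ : IsLUB {r : ℝ | ∃ x : A, ‖x‖ ≤ 1 ∧ r = N (Φ x)} normΦ)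
    (hP : IsLUB {r : ℝ | ∃ x : A, ‖x‖ ≤ 1 ∧ r = N (Φ (x ^ m))} normP) :
    (2 : ℝ) ^ (-(1 / q)) * normΦ ≤ normP ∧ normP ≤ normΦ := by
  have hm0 : m ≠ 0 := by omega
  have hnormP : 0 ≤ normP := by
    refine hP.1 ⟨0, by simp, ?_⟩
    rw [zero_pow hm0, map_zero]
    exact ((hNzero 0).mpr rfl).symm
  constructor
  · -- lower bound
    have key : ∀ x : A, ‖x‖ ≤ 1 → N (Φ x) ≤ (2:ℝ) ^ (1/q) * normP := by
      intro x hx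
      set h : A := (2⁻¹ : ℂ) • (x + star x) with hh
      set k : A := (2⁻¹ : ℂ) • (Complex.I • (star x - x)) with hk
      have hsa_h : IsSelfAdjoint h := by
        rw [IsSelfAdjoint, hh, star_smul, star_add, star_star]
        simp [add_comm]
      have hsa_k : IsSelfAdjoint k := by
        rw [IsSelfAdjoint, hk, star_smul, star_smul, star_sub, star_star]
        simp [smul_smul]
        ring_nf
        simp [smul_sub, sub_smul, Complex.ext_iff]
      have hnh : ‖h‖ ≤ 1 := by
        rw [hh]
        calc ‖(2⁻¹ : ℂ) • (x + star x)‖ = ‖(2⁻¹ : ℂ)‖ * ‖x + star x‖ := norm_smul _ _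
        _ ≤ 2⁻¹ * (‖x‖ + ‖star x‖) := by
            gcongr
            · simp
            · exact norm_add_le _ _
        _ = ‖x‖ := by rw [norm_star]; ring
        _ ≤ 1 := hx
      have hnk : ‖k‖ ≤ 1 := by
        rw [hk]
        calc ‖(2⁻¹ : ℂ) • (Complex.I • (star x - x))‖
            = ‖(2⁻¹ : ℂ)‖ * (‖Complex.I‖ * ‖star x - x‖) := by rw [norm_smul, norm_smul]
        _ ≤ 2⁻¹ * (1 * (‖star x‖ + ‖x‖)) := by
            gcongr
            · simp
            · simp
            · exact norm_sub_le _ _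
        _ = ‖x‖ := by rw [norm_star]; ring
        _ ≤ 1 := hx
      obtain ⟨y₁, hy₁, hy₁m⟩ := selfAdjoint_eq_pow_of_norm_le hm0 hsa_h hnh
      obtain ⟨y₂', hy₂', hy₂m⟩ := selfAdjoint_eq_pow_of_norm_le hm0 hsa_k hnk
      set ζ : ℂ := Complex.exp ((Real.pi / (2*m) : ℝ) * Complex.I) with hζ
      have hζm : ζ ^ m = Complex.I := by
        rw [hζ, ← Complex.exp_nat_mul]
        have : (m : ℂ) * ((Real.pi / (2*m) : ℝ) * Complex.I)
            = (Real.pi / 2 : ℝ) * Complex.I := by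
          have hmC : (m:ℂ) ≠ 0 := Nat.cast_ne_zero.mpr hm0
          push_cast
          field_simp
        rw [this, Complex.exp_mul_I]
        push_cast
        rw [Complex.cos_pi_div_two, Complex.sin_pi_div_two]
        ring
      set y₂ : A := ζ • y₂' with hy2def
      have hy₂ : ‖y₂‖ ≤ 1 := by
        rw [hy2def, norm_smul, hζ, Complex.norm_exp_ofReal_mul_I, one_mul]
        exact hy₂'
      have hy₂pow : y₂ ^ m = Complex.I • k := by
        rw [hy2def, smul_pow, hy₂m, hζm]
      have hxdecomp : x = y₁ ^ m + y₂ ^ m := by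
        rw [hy₁m, hy₂pow, hh, hk, smul_smul, smul_smul,
          show Complex.I * 2⁻¹ * Complex.I = -2⁻¹ by
            rw [mul_comm Complex.I (2⁻¹:ℂ), mul_assoc, Complex.I_mul_I]; ring]
        module
      have hP1 : N (Φ (y₁ ^ m)) ≤ normP := hP.1 ⟨y₁, hy₁, rfl⟩
      have hP2 : N (Φ (y₂ ^ m)) ≤ normP := hP.1 ⟨y₂, hy₂, rfl⟩
      have hq' : N (Φ x) ^ q ≤ 2 * normP ^ q := by
        have : Φ x = Φ (y₁ ^ m) + Φ (y₂ ^ m) := by rw [← map_add, ← hxdecomp]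
        rw [this]
        calc N (Φ (y₁ ^ m) + Φ (y₂ ^ m)) ^ q
            ≤ N (Φ (y₁ ^ m)) ^ q + N (Φ (y₂ ^ m)) ^ q := hNadd _ _
        _ ≤ normP ^ q + normP ^ q :=
            add_le_add (Real.rpow_le_rpow (hN0 _) hP1 hq0.le)
              (Real.rpow_le_rpow (hN0 _) hP2 hq0.le)
        _ = 2 * normP ^ q := by ring
      calc N (Φ x) = (N (Φ x) ^ q) ^ (1/q) := by
            rw [← Real.rpow_mul (hN0 _), mul_one_div_cancel hq0.ne', Real.rpow_one]
      _ ≤ (2 * normP ^ q) ^ (1/q) :=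
            Real.rpow_le_rpow (Real.rpow_nonneg (hN0 _) q) hq' (by positivity)
      _ = (2:ℝ) ^ (1/q) * (normP ^ q) ^ (1/q) :=
            Real.mul_rpow (by norm_num) (Real.rpow_nonneg hnormP q)
      _ = (2:ℝ) ^ (1/q) * normP := by
            rw [← Real.rpow_mul hnormP, mul_one_div_cancel hq0.ne', Real.rpow_one]
    have hub : normΦ ≤ (2:ℝ) ^ (1/q) * normP := by
      refine hΦ.2 ?_
      rintro r ⟨x, hx, rfl⟩
      exact key x hx
    calc (2:ℝ) ^ (-(1/q)) * normΦ ≤ (2:ℝ) ^ (-(1/q)) * ((2:ℝ) ^ (1/q) * normP) :=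
          mul_le_mul_of_nonneg_left hub (Real.rpow_nonneg (by norm_num) _)
    _ = normP := by
          rw [← mul_assoc, ← Real.rpow_add (by norm_num : (0:ℝ) < 2), neg_add_cancel,
            Real.rpow_zero, one_mul]
  · -- upper bound
    refine hP.2 ?_
    rintro r ⟨x, hx, rfl⟩
    refine hΦ.1 ⟨x ^ m, ?_, rfl⟩
    calc ‖x ^ m‖ ≤ ‖x‖ ^ m := norm_pow_le' x (by omega)
    _ ≤ 1 := pow_le_one₀ (norm_nonneg x) hx
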